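/- Let d ≥ 3 and let k_1, ..., k_d be integers with each k_i ≥ 3, satisfying the angle-sum condition Σ_{i=1}^d (k_i - 2)/k_i > 2. Then there exists a unique l_0 > 0 such that Σ_{i=1}^d 2·arcsin(cos(π/k_i)/cosh(l_0/2)) = 2π. -/

import Mathlib

open Real Filter Topology Set

theorem exists_unique_side_length (d : ℕ) (hd : 3 ≤ d) (k : Fin d → ℤ)
    (hk : ∀ i, 3 ≤ k i)
    (hsum : (∑ i, ((k i : ℝ) - 2) / (k i : ℝ)) > 2) :
    ∃! l₀ : ℝ, 0 < l₀ ∧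
      (∑ i, 2 * arcsin (cos (π / (k i : ℝ)) / cosh (l₀ / 2))) = 2 * π := by
  have hdpos : 0 < d := by omega
  haveI : Nonempty (Fin d) := ⟨⟨0, hdpos⟩⟩
  set f : ℝ → ℝ := fun l => ∑ i, 2 * arcsin (cos (π / (k i : ℝ)) / cosh (l / 2)) with hf
  -- basic facts about each k i
  have hk3 : ∀ i, (3 : ℝ) ≤ (k i : ℝ) := fun i => by exact_mod_cast hk i
  have hkpos : ∀ i, (0 : ℝ) < (k i : ℝ) := fun i => lt_of_lt_of_le (by norm_num) (hk3 i)
  have hθpos : ∀ i, 0 < π / (k i : ℝ) := fun i => div_pos pi_pos (hkpos i)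
  have hθlt : ∀ i, π / (k i : ℝ) < π / 2 := fun i =>
    div_lt_div_of_pos_left pi_pos (by norm_num) (lt_of_lt_of_le (by norm_num) (hk3 i))
  have hcpos : ∀ i, 0 < cos (π / (k i : ℝ)) := fun i =>
    Real.cos_pos_of_mem_Ioo ⟨by linarith [hθpos i, pi_pos], hθlt i⟩
  have hcle : ∀ i, cos (π / (k i : ℝ)) ≤ 1 := fun i => Real.cos_le_one _
  -- membership in Icc (-1) 1 for arcsin arguments
  have hmem : ∀ (i : Fin d) (l : ℝ), cos (π / (k i : ℝ)) / cosh (l / 2) ∈ Icc (-1 : ℝ) 1 := by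
    intro i l
    have h1 : (1 : ℝ) ≤ cosh (l / 2) := one_le_cosh _
    have hpos : 0 < cosh (l / 2) := lt_of_lt_of_le one_pos h1
    constructor
    · have : 0 ≤ cos (π / (k i : ℝ)) / cosh (l / 2) := div_nonneg (hcpos i).le hpos.le
      linarith
    · rw [div_le_one hpos]; exact le_trans (hcle i) h1
  -- f is strictly antitone on [0, ∞)
  have hanti : ∀ a b : ℝ, 0 ≤ a → a < b → f b < f a := by
    intro a b ha hab
    apply Finset.sum_lt_sum_of_nonempty Finset.univ_nonempty
    intro i _
    have hcoshlt : cosh (a / 2) < cosh (b / 2) := by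
      rw [Real.cosh_lt_cosh]
      rw [abs_of_nonneg (by linarith), abs_of_nonneg (by linarith)]
      linarith
    have ha1 : (1:ℝ) ≤ cosh (a / 2) := one_le_cosh _
    have hlt : cos (π / (k i : ℝ)) / cosh (b / 2) < cos (π / (k i : ℝ)) / cosh (a / 2) :=
      div_lt_div_of_pos_left (hcpos i) (by linarith) hcoshlt
    have := strictMonoOn_arcsin (hmem i b) (hmem i a) hlt
    linarith
  -- continuity of f
  have hcont : Continuous f := by
    apply continuous_finset_sum
    intro i _
    exact continuous_const.mul (Real.continuous_arcsin.comp
      (continuous_const.div (Real.continuous_cosh.comp (continuous_id.div_const 2))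
        (fun x => (cosh_pos (x := x / 2)).ne')))
  -- value at 0
  have h0 : f 0 = π * ∑ i, ((k i : ℝ) - 2) / (k i : ℝ) := by
    rw [hf, Finset.mul_sum]
    apply Finset.sum_congr rfl
    intro i _
    have hθle : π / (k i : ℝ) ≤ π := by
      rw [div_le_iff₀ (hkpos i)]
      nlinarith [pi_pos, hk3 i]
    have : arcsin (cos (π / (k i : ℝ))) = π / 2 - π / (k i : ℝ) := by
      rw [← Real.sin_pi_div_two_sub]
      exact arcsin_sin (by linarith [hθpos i]) (by linarith [hθpos i])
    simp only [zero_div, Real.cosh_zero, div_one, this]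
    have hne : (k i : ℝ) ≠ 0 := (hkpos i).ne'
    field_simp
  have hf0 : 2 * π < f 0 := by
    rw [h0]
    nlinarith [pi_pos]
  -- f tends to 0 at infinity
  have htend : Tendsto f atTop (nhds 0) := by
    have hcosh : Tendsto (fun l : ℝ => cosh (l / 2)) atTop atTop := by
      have hhalf : Tendsto (fun l : ℝ => l / 2) atTop atTop :=
        tendsto_id.atTop_div_const (by norm_num)
      have h1 : Tendsto (fun l : ℝ => exp (l / 2) / 2) atTop atTop :=
        (tendsto_exp_atTop.comp hhalf).atTop_div_const (by norm_num)
      apply tendsto_atTop_mono _ h1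
      intro x
      rw [Real.cosh_eq]
      have := Real.exp_pos (-(x / 2))
      linarith
    have : Tendsto f atTop (nhds (∑ i : Fin d, 2 * arcsin (cos (π / (k i : ℝ)) * 0))) := by
      apply tendsto_finset_sum
      intro i _
      apply (tendsto_const_nhds.mul (Real.continuous_arcsin.continuousAt.tendsto.comp ?_))
      have : Tendsto (fun l : ℝ => cos (π / (k i : ℝ)) / cosh (l / 2)) atTop (nhds 0) :=
        Tendsto.div_atTop tendsto_const_nhds hcosh
      simpa using this
    simpa using this
  -- find b with f b < 2π
  obtain ⟨B, hB⟩ := (htend.eventually_lt_const (by positivity : (0:ℝ) < 2 * π)).exists_forall_of_atTop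
  set b : ℝ := max B 1 with hb
  have hbpos : (0 : ℝ) < b := lt_of_lt_of_le one_pos (le_max_right _ _)
  have hfb : f b < 2 * π := hB b (le_max_left _ _)
  -- intermediate value theorem
  have hsub : Icc (f b) (f 0) ⊆ f '' Icc 0 b :=
    intermediate_value_Icc' hbpos.le hcont.continuousOn
  obtain ⟨l₀, hl₀mem, hl₀eq⟩ := hsub ⟨hfb.le, hf0.le⟩
  have hl₀pos : 0 < l₀ := by
    rcases lt_or_eq_of_le hl₀mem.1 with h | h
    · exact h
    · exfalso; rw [← h] at hl₀eq; linarith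
  refine ⟨l₀, ⟨hl₀pos, hl₀eq⟩, ?_⟩
  intro y ⟨hypos, hyeq⟩
  have hyeq' : f y = 2 * π := hyeq
  by_contra hne
  rcases lt_or_gt_of_ne hne with h | h
  · have := hanti y l₀ hypos.le h
    rw [hyeq', hl₀eq] at this; linarith
  · have := hanti l₀ y hl₀pos.le h
    rw [hyeq', hl₀eq] at this; linarith
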